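/- Let I, T, L, N ≥ 1 be positive integers, let X : {1,…,I}×{1,…,T} → {0,1} be a treatment schedule with design constants U = Σ_{i,j} X_{ij}, V = Σ_i (Σ_j X_{ij})², W = Σ_j (Σ_i X_{ij})², and let Σ_b, Σ_s, Σ_ε be L×L symmetric positive definite real matrices. Set S = Σ_s + N^{-1}·Σ_ε, let Ṽ = I_T ⊗ S + J_T ⊗ Σ_b (a TL×TL matrix), and for each cluster i let Z_i = (I_T | X_i) ⊗ I_L, where (I_T | X_i) is the T×(T+1) matrix obtained by appending to I_T the column X_i = (X_{i1},…,X_{iT})^⊤. Let G = Σ_{i=1}^I Z_i^⊤ Ṽ^{-1} Z_i, a (T+1)L×(T+1)L matrix. If G is invertible and the L×L matrix (I·T·U − T·W + U² − I·V)·S^{-1} − (U² − I·V)·(T·Σ_b + S)^{-1} is invertible, then the bottom-right L×L block of G^{-1} equals I·T·[(I·T·U − T·W + U² − I·V)·S^{-1} − (U² − I·V)·(T·Σ_b + S)^{-1}]^{-1}. -/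

import Mathlib

open Matrix Kronecker

/-- The u×u all-ones matrix over ℝ. -/
def allOnes (u : ℕ) : Matrix (Fin u) (Fin u) ℝ := Matrix.of fun _ _ => 1

lemma sum_kron {ι p q r s : Type*} [Fintype ι] (A : ι → Matrix p q ℝ) (B : Matrix r s ℝ) :
    (∑ i, A i) ⊗ₖ B = ∑ i, A i ⊗ₖ B := by
  ext ⟨a, b⟩ ⟨c, d⟩
  simp [Matrix.sum_apply, Finset.sum_mul]

lemma schur_br {n m : Type*} [Fintype n] [Fintype m] [DecidableEq n] [DecidableEq m]
    (P : Matrix n n ℝ) (Q : Matrix n m ℝ) (Qt : Matrix m n ℝ) (R : Matrix m m ℝ)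
    (Pi : Matrix n n ℝ) (Di : Matrix m m ℝ)
    (hP : P * Pi = 1) (hD : (R - Qt * Pi * Q) * Di = 1) :
    (Matrix.fromBlocks P Q Qt R)⁻¹ =
      Matrix.fromBlocks (Pi + Pi * Q * Di * Qt * Pi) (-(Pi * Q * Di)) (-(Di * Qt * Pi)) Di := by
  have hRD : R * Di = 1 + Qt * Pi * Q * Di := by
    have h := hD
    rw [Matrix.sub_mul] at h
    linear_combination (norm := noncomm_ring) h
  apply Matrix.inv_eq_right_inv
  rw [Matrix.fromBlocks_multiply, ← Matrix.fromBlocks_one, Matrix.fromBlocks_inj]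
  refine ⟨?_, ?_, ?_, ?_⟩
  · simp only [Matrix.mul_add, Matrix.mul_neg, ← Matrix.mul_assoc, hP, Matrix.one_mul]
    abel
  · simp only [Matrix.mul_neg, ← Matrix.mul_assoc, hP, Matrix.one_mul]
    abel
  · simp only [Matrix.mul_add, Matrix.mul_neg, ← Matrix.mul_assoc, hRD, Matrix.add_mul,
      Matrix.one_mul]
    abel
  · simp only [Matrix.mul_neg, ← Matrix.mul_assoc, hRD, Matrix.add_mul, Matrix.one_mul]
    abel

lemma smul_posSemidef {L : ℕ} {c : ℝ} (hc : 0 ≤ c) {M : Matrix (Fin L) (Fin L) ℝ}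
    (hM : M.PosDef) : (c • M).PosSemidef := by
  constructor
  · simp [Matrix.IsHermitian, Matrix.conjTranspose_smul, show Mᵀ = M from hM.isHermitian]
  · intro x
    have h := hM.posSemidef.2 x
    exact (hM.posSemidef.smul hc).2 x

/-- The bottom-right L×L block of `(∑ᵢ Zᵢᵀ Ṽ⁻¹ Zᵢ)⁻¹` equals
`I·T·[(ITU − TW + U² − IV)·S⁻¹ − (U² − IV)·(T·Σ_b + S)⁻¹]⁻¹` for a cross-sectional
stepped wedge design with treatment schedule `X`. -/
theorem fgls_bottom_right_block
    (I T L N : ℕ) (hI : 1 ≤ I) (hT : 1 ≤ T) (hL : 1 ≤ L) (hN : 1 ≤ N)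
    (X : Fin I → Fin T → ℝ) (hX : ∀ i j, X i j = 0 ∨ X i j = 1)
    (Sb Ss Se : Matrix (Fin L) (Fin L) ℝ)
    (hSb : Sb.PosDef) (hSs : Ss.PosDef) (hSe : Se.PosDef)
    (U V W : ℝ)
    (hU : U = ∑ i : Fin I, ∑ j : Fin T, X i j)
    (hV : V = ∑ i : Fin I, (∑ j : Fin T, X i j) ^ 2)
    (hW : W = ∑ j : Fin T, (∑ i : Fin I, X i j) ^ 2)
    (S : Matrix (Fin L) (Fin L) ℝ) (hS : S = Ss + ((N : ℝ))⁻¹ • Se)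
    (Vt : Matrix (Fin T × Fin L) (Fin T × Fin L) ℝ)
    (hVt : Vt = (1 : Matrix (Fin T) (Fin T) ℝ) ⊗ₖ S + allOnes T ⊗ₖ Sb)
    (Z : Fin I → Matrix (Fin T × Fin L) (Fin (T + 1) × Fin L) ℝ)
    (hZ : Z = fun i =>
      (Matrix.of fun (j : Fin T) (p : Fin (T + 1)) =>
        if (p : ℕ) = T then X i j else if (j : ℕ) = (p : ℕ) then (1 : ℝ) else 0) ⊗ₖ
        (1 : Matrix (Fin L) (Fin L) ℝ))
    (G : Matrix (Fin (T + 1) × Fin L) (Fin (T + 1) × Fin L) ℝ)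
    (hG : G = ∑ i : Fin I, (Z i)ᵀ * Vt⁻¹ * Z i)
    (E : Matrix (Fin L) (Fin L) ℝ)
    (hE : E = ((I : ℝ) * T * U - T * W + U ^ 2 - I * V) • S⁻¹ -
      (U ^ 2 - (I : ℝ) * V) • ((T : ℝ) • Sb + S)⁻¹)
    (hGunit : IsUnit G) (hEunit : IsUnit E) :
    (Matrix.of fun l l' : Fin L => G⁻¹ (Fin.last T, l) (Fin.last T, l')) =
      ((I : ℝ) * T) • E⁻¹ := by
  -- scalar facts
  have hT0 : (T : ℝ) ≠ 0 := Nat.cast_ne_zero.mpr (by omega)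
  have hI0 : (I : ℝ) ≠ 0 := Nat.cast_ne_zero.mpr (by omega)
  have hIT0 : (I : ℝ) * T ≠ 0 := mul_ne_zero hI0 hT0
  -- positive definiteness and inverses
  have hSpd : S.PosDef := by
    rw [hS]
    exact hSs.add_posSemidef (smul_posSemidef (by positivity) hSe)
  set Tb : Matrix (Fin L) (Fin L) ℝ := (T : ℝ) • Sb + S with hTbdef
  have hTbpd : Tb.PosDef :=
    Matrix.PosDef.posSemidef_add (smul_posSemidef (Nat.cast_nonneg T) hSb) hSpd
  have hSS : S * S⁻¹ = 1 :=
    Matrix.mul_nonsing_inv _ ((Matrix.isUnit_iff_isUnit_det S).mp hSpd.isUnit)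
  have hTbTi : Tb * Tb⁻¹ = 1 :=
    Matrix.mul_nonsing_inv _ ((Matrix.isUnit_iff_isUnit_det Tb).mp hTbpd.isUnit)
  have hEE : E * E⁻¹ = 1 :=
    Matrix.mul_nonsing_inv _ ((Matrix.isUnit_iff_isUnit_det E).mp hEunit)
  set Bm : Matrix (Fin L) (Fin L) ℝ := (T : ℝ)⁻¹ • (Tb⁻¹ - S⁻¹) with hBmdef
  have hBm' : Bm = (T : ℝ)⁻¹ • Tb⁻¹ - (T : ℝ)⁻¹ • S⁻¹ := by rw [hBmdef, smul_sub]
  -- the key cancellation identity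
  have key : S * Bm + Sb * S⁻¹ + (T : ℝ) • (Sb * Bm) = 0 := by
    have e2 : (T : ℝ) • (Sb * Bm) = Sb * Tb⁻¹ - Sb * S⁻¹ := by
      rw [hBmdef, Matrix.mul_smul, smul_smul, mul_inv_cancel₀ hT0, one_smul, Matrix.mul_sub]
    have h4 : (T : ℝ) • (Sb * Tb⁻¹) + S * Tb⁻¹ = 1 := by
      rw [← Matrix.smul_mul, ← Matrix.add_mul, ← hTbdef]
      exact hTbTi
    have e1 : S * Bm = (T : ℝ)⁻¹ • (1 : Matrix (Fin L) (Fin L) ℝ)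
        - Sb * Tb⁻¹ - (T : ℝ)⁻¹ • (1 : Matrix (Fin L) (Fin L) ℝ) := by
      have h5 : S * Tb⁻¹ = 1 - (T : ℝ) • (Sb * Tb⁻¹) := by
        rw [eq_sub_iff_add_eq, add_comm]; exact h4
      rw [hBm', Matrix.mul_sub, Matrix.mul_smul, Matrix.mul_smul, h5, hSS, smul_sub,
        smul_smul, inv_mul_cancel₀ hT0, one_smul]
    rw [e1, e2]
    abel
  -- the inverse of Vt
  set Vinv : Matrix (Fin T × Fin L) (Fin T × Fin L) ℝ :=
    (1 : Matrix (Fin T) (Fin T) ℝ) ⊗ₖ S⁻¹ + allOnes T ⊗ₖ Bm with hVinvdef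
  have hJJ : allOnes T * allOnes T = (T : ℝ) • allOnes T := by
    ext j j'
    simp [allOnes, Matrix.mul_apply, Finset.sum_const, Finset.card_univ]
  have hVtVinv : Vt * Vinv = 1 := by
    rw [hVt, hVinvdef]
    rw [Matrix.add_mul, Matrix.mul_add, Matrix.mul_add]
    simp only [← Matrix.mul_kronecker_mul, Matrix.one_mul, Matrix.mul_one, hSS, hJJ,
      Matrix.smul_kronecker, ← Matrix.kronecker_smul]
    rw [add_assoc, ← Matrix.kronecker_add, ← Matrix.kronecker_add, ← add_assoc, key,
      Matrix.kronecker_zero, add_zero, Matrix.one_kronecker_one]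
  have hVtinv : Vt⁻¹ = Vinv := Matrix.inv_eq_right_inv hVtVinv
  have hVinvVt : Vinv * Vt = 1 := mul_eq_one_comm.mp hVtVinv
  -- design matrices
  set M : Fin I → Matrix (Fin T) (Fin (T + 1)) ℝ := fun i =>
    Matrix.of fun (j : Fin T) (p : Fin (T + 1)) =>
      if (p : ℕ) = T then X i j else if (j : ℕ) = (p : ℕ) then (1 : ℝ) else 0 with hMdef
  have hZVZ : ∀ i, (Z i)ᵀ * Vt⁻¹ * Z i =
      ((M i)ᵀ * M i) ⊗ₖ S⁻¹ + ((M i)ᵀ * allOnes T * M i) ⊗ₖ Bm := by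
    intro i
    have hZi : Z i = M i ⊗ₖ (1 : Matrix (Fin L) (Fin L) ℝ) := by rw [hZ]
    have hZti : (Z i)ᵀ = (M i)ᵀ ⊗ₖ (1 : Matrix (Fin L) (Fin L) ℝ) := by
      rw [hZi]
      ext ⟨p, l⟩ ⟨j, l'⟩
      simp [Matrix.transpose_apply, Matrix.one_apply, eq_comm]
    rw [hZti, hZi, hVtinv, hVinvdef]
    rw [Matrix.mul_add, Matrix.add_mul]
    simp only [← Matrix.mul_kronecker_mul, Matrix.one_mul, Matrix.mul_one]
  set A : Matrix (Fin (T + 1)) (Fin (T + 1)) ℝ := ∑ i, (M i)ᵀ * M i with hAdef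
  set C : Matrix (Fin (T + 1)) (Fin (T + 1)) ℝ := ∑ i, (M i)ᵀ * allOnes T * M i with hCdef
  have hGAC : G = A ⊗ₖ S⁻¹ + C ⊗ₖ Bm := by
    rw [hG, Finset.sum_congr rfl fun i _ => hZVZ i, Finset.sum_add_distrib,
      hAdef, hCdef, sum_kron, sum_kron]
  -- index equivalence
  set f : (Fin T × Fin L) ⊕ (Fin 1 × Fin L) ≃ Fin (T + 1) × Fin L :=
    (Equiv.sumProdDistrib (Fin T) (Fin 1) (Fin L)).symm.trans
      (Equiv.prodCongr finSumFinEquiv (Equiv.refl (Fin L))) with hfdef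
  have hfl : ∀ (j : Fin T) (l : Fin L), f (Sum.inl (j, l)) = (Fin.castAdd 1 j, l) := by
    intro j l
    simp [hfdef]
  have hfr : ∀ (x : Fin 1) (l : Fin L), f (Sum.inr (x, l)) = (Fin.last T, l) := by
    intro x l
    have hx : Fin.natAdd T x = Fin.last T := by
      have := x.isLt
      ext
      simp only [Fin.natAdd, Fin.val_last]
      omega
    simp [hfdef, hx]
  -- entries of M
  have hMl : ∀ (i : Fin I) (j j' : Fin T),
      M i j (Fin.castAdd 1 j') = if j = j' then (1 : ℝ) else 0 := by
    intro i j j'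
    have h2 : ¬ ((Fin.castAdd 1 j' : Fin (T + 1)) : ℕ) = T := by
      have := j'.isLt
      simp [Fin.castAdd]
      omega
    simp only [hMdef, Matrix.of_apply, if_neg h2]
    simp [Fin.castAdd, Fin.val_eq_val]
  have hMr : ∀ (i : Fin I) (j : Fin T), M i j (Fin.last T) = X i j := by
    intro i j
    simp [hMdef, Fin.val_last]
  -- column sums of the schedule
  set m' : Fin T → ℝ := fun j => ∑ i, X i j with hm'def
  set c' : Fin I → ℝ := fun i => ∑ j, X i j with hc'def
  have hUm : (∑ j, m' j) = U := by
    rw [hU, Finset.sum_comm]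
  have hUc : (∑ i, c' i) = U := by rw [hU]
  have hXX : ∀ i k, X i k * X i k = X i k := by
    intro i k
    rcases hX i k with h | h <;> rw [h] <;> ring
  -- entry identities for A and C
  have hMM : ∀ (i : Fin I) (p p' : Fin (T + 1)),
      ((M i)ᵀ * M i) p p' = ∑ k, M i k p * M i k p' := by
    intro i p p'
    simp [Matrix.mul_apply]
  have hMJM : ∀ (i : Fin I) (p p' : Fin (T + 1)),
      ((M i)ᵀ * allOnes T * M i) p p' = (∑ k, M i k p) * (∑ k, M i k p') := by
    intro i p p'
    simp only [Matrix.mul_apply, Matrix.transpose_apply, allOnes, Matrix.of_apply, mul_one]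
    rw [Finset.mul_sum]
  have hdelta : ∀ (j j' : Fin T),
      (∑ k : Fin T, (if k = j then (1 : ℝ) else 0) * (if k = j' then 1 else 0)) =
        if j = j' then 1 else 0 := by
    intro j j'
    simp only [ite_mul, zero_mul, one_mul, Finset.sum_ite_eq', Finset.mem_univ, if_true]
  have hA11 : ∀ j j', A (Fin.castAdd 1 j) (Fin.castAdd 1 j') =
      if j = j' then (I : ℝ) else 0 := by
    intro j j'
    have step : ∀ i : Fin I, ((M i)ᵀ * M i) (Fin.castAdd 1 j) (Fin.castAdd 1 j') =
        if j = j' then (1 : ℝ) else 0 := by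
      intro i
      rw [hMM]
      simp only [hMl]
      exact hdelta j j'
    rw [hAdef, Matrix.sum_apply, Finset.sum_congr rfl fun i _ => step i]
    by_cases h : j = j' <;> simp [h, Finset.card_univ]
  have hA12 : ∀ j, A (Fin.castAdd 1 j) (Fin.last T) = m' j := by
    intro j
    rw [hAdef, Matrix.sum_apply, hm'def]
    refine Finset.sum_congr rfl fun i _ => ?_
    rw [hMM]
    simp [hMl, hMr, ite_mul, zero_mul, one_mul, Finset.sum_ite_eq']
  have hA21 : ∀ j, A (Fin.last T) (Fin.castAdd 1 j) = m' j := by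
    intro j
    rw [hAdef, Matrix.sum_apply, hm'def]
    refine Finset.sum_congr rfl fun i _ => ?_
    rw [hMM]
    simp [hMl, hMr, mul_ite, mul_zero, mul_one, Finset.sum_ite_eq']
  have hA22 : A (Fin.last T) (Fin.last T) = U := by
    rw [hAdef, Matrix.sum_apply, hU]
    refine Finset.sum_congr rfl fun i _ => ?_
    rw [hMM]
    simp only [hMr]
    rw [Finset.sum_congr rfl fun k _ => hXX i k]
  have hcol1 : ∀ (i : Fin I) (j : Fin T), (∑ k, M i k (Fin.castAdd 1 j)) = 1 := by
    intro i j
    simp [hMl, Finset.sum_ite_eq']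
  have hcol2 : ∀ (i : Fin I), (∑ k, M i k (Fin.last T)) = c' i := by
    intro i
    simp [hMr, hc'def]
  have hC11 : ∀ j j', C (Fin.castAdd 1 j) (Fin.castAdd 1 j') = (I : ℝ) := by
    intro j j'
    have step : ∀ i : Fin I, ((M i)ᵀ * allOnes T * M i) (Fin.castAdd 1 j) (Fin.castAdd 1 j')
        = (1 : ℝ) := by
      intro i
      rw [hMJM, hcol1, hcol1, one_mul]
    rw [hCdef, Matrix.sum_apply, Finset.sum_congr rfl fun i _ => step i]
    simp [Finset.card_univ]
  have hC12 : ∀ j, C (Fin.castAdd 1 j) (Fin.last T) = U := by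
    intro j
    rw [hCdef, Matrix.sum_apply, ← hUc]
    exact Finset.sum_congr rfl fun i _ => by rw [hMJM, hcol1, hcol2, one_mul]
  have hC21 : ∀ j, C (Fin.last T) (Fin.castAdd 1 j) = U := by
    intro j
    rw [hCdef, Matrix.sum_apply, ← hUc]
    exact Finset.sum_congr rfl fun i _ => by rw [hMJM, hcol1, hcol2, mul_one]
  have hC22 : C (Fin.last T) (Fin.last T) = V := by
    rw [hCdef, Matrix.sum_apply, hV]
    refine Finset.sum_congr rfl fun i _ => ?_
    rw [hMJM, hcol2, ← sq]
  -- the blocks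
  set colm : Matrix (Fin T) (Fin 1) ℝ := Matrix.of fun j _ => m' j with hcolmdef
  set col1 : Matrix (Fin T) (Fin 1) ℝ := Matrix.of fun _ _ => (1 : ℝ) with hcol1def
  set rowm : Matrix (Fin 1) (Fin T) ℝ := Matrix.of fun _ j => m' j with hrowmdef
  set P : Matrix (Fin T × Fin L) (Fin T × Fin L) ℝ := (I : ℝ) • Vinv with hPdef
  set Pinv : Matrix (Fin T × Fin L) (Fin T × Fin L) ℝ := (I : ℝ)⁻¹ • Vt with hPinvdef
  set Q : Matrix (Fin T × Fin L) (Fin 1 × Fin L) ℝ :=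
    colm ⊗ₖ S⁻¹ + col1 ⊗ₖ (U • Bm) with hQdef
  set Qt : Matrix (Fin 1 × Fin L) (Fin T × Fin L) ℝ :=
    rowm ⊗ₖ S⁻¹ + (Matrix.of fun _ _ => (1 : ℝ)) ⊗ₖ (U • Bm) with hQtdef
  set Rb : Matrix (Fin 1 × Fin L) (Fin 1 × Fin L) ℝ :=
    (1 : Matrix (Fin 1) (Fin 1) ℝ) ⊗ₖ (U • S⁻¹ + V • Bm) with hRbdef
  -- block decomposition of G
  have hGf : G.submatrix f f = Matrix.fromBlocks P Q Qt Rb := by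
    ext x y
    rcases x with ⟨j, l⟩ | ⟨x0, l⟩ <;> rcases y with ⟨j', l'⟩ | ⟨x0', l'⟩
    · rw [Matrix.submatrix_apply, hfl, hfl, Matrix.fromBlocks_apply₁₁, hGAC]
      simp only [Matrix.add_apply, Matrix.kroneckerMap_apply, hA11, hC11, hPdef,
        Matrix.smul_apply, hVinvdef, Matrix.one_apply, allOnes, Matrix.of_apply,
        smul_eq_mul]
      by_cases h : j = j' <;> simp [h] <;> ring
    · rw [Matrix.submatrix_apply, hfl, hfr, Matrix.fromBlocks_apply₁₂, hGAC]
      simp only [Matrix.add_apply, Matrix.kroneckerMap_apply, hA12, hC12, hQdef,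
        hcolmdef, hcol1def, Matrix.of_apply, Matrix.smul_apply, smul_eq_mul]
      ring
    · rw [Matrix.submatrix_apply, hfr, hfl, Matrix.fromBlocks_apply₂₁, hGAC]
      simp only [Matrix.add_apply, Matrix.kroneckerMap_apply, hA21, hC21, hQtdef,
        hrowmdef, Matrix.of_apply, Matrix.smul_apply, smul_eq_mul]
      ring
    · rw [Matrix.submatrix_apply, hfr, hfr, Matrix.fromBlocks_apply₂₂, hGAC]
      have hx : x0 = x0' := Subsingleton.elim x0 x0'
      subst hx
      simp only [Matrix.add_apply, Matrix.kroneckerMap_apply, hA22, hC22, hRbdef,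
        Matrix.one_apply_eq, Matrix.smul_apply, smul_eq_mul]
      ring
  -- P * Pinv = 1
  have hPPinv : P * Pinv = 1 := by
    rw [hPdef, hPinvdef, Matrix.smul_mul, Matrix.mul_smul, hVinvVt, smul_smul,
      mul_inv_cancel₀ hI0, one_smul]
  -- Vt * Q = colm ⊗ 1
  have hJcolm : allOnes T * colm = U • col1 := by
    ext j x
    simp only [allOnes, hcolmdef, hcol1def, Matrix.mul_apply, Matrix.of_apply, one_mul,
      Matrix.smul_apply, smul_eq_mul, mul_one]
    exact hUm
  have hJcol1 : allOnes T * col1 = (T : ℝ) • col1 := by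
    ext j x
    simp [allOnes, hcol1def, Matrix.mul_apply, Finset.sum_const, Finset.card_univ]
  have t1 : ((1 : Matrix (Fin T) (Fin T) ℝ) ⊗ₖ S) * (colm ⊗ₖ S⁻¹) =
      colm ⊗ₖ (1 : Matrix (Fin L) (Fin L) ℝ) := by
    rw [← Matrix.mul_kronecker_mul, Matrix.one_mul, hSS]
  have t2 : ((1 : Matrix (Fin T) (Fin T) ℝ) ⊗ₖ S) * (col1 ⊗ₖ (U • Bm)) =
      col1 ⊗ₖ (U • (S * Bm)) := by
    rw [← Matrix.mul_kronecker_mul, Matrix.one_mul, Matrix.mul_smul]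
  have t3 : (allOnes T ⊗ₖ Sb) * (colm ⊗ₖ S⁻¹) = col1 ⊗ₖ (U • (Sb * S⁻¹)) := by
    rw [← Matrix.mul_kronecker_mul, hJcolm, Matrix.smul_kronecker, ← Matrix.kronecker_smul]
  have t4 : (allOnes T ⊗ₖ Sb) * (col1 ⊗ₖ (U • Bm)) =
      col1 ⊗ₖ (U • ((T : ℝ) • (Sb * Bm))) := by
    rw [← Matrix.mul_kronecker_mul, hJcol1, Matrix.mul_smul, Matrix.smul_kronecker,
      ← Matrix.kronecker_smul, smul_comm]
  have hVtQ : Vt * Q = colm ⊗ₖ (1 : Matrix (Fin L) (Fin L) ℝ) := by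
    have hc : col1 ⊗ₖ (U • (S * Bm)) + (col1 ⊗ₖ (U • (Sb * S⁻¹))
        + col1 ⊗ₖ (U • ((T : ℝ) • (Sb * Bm)))) = 0 := by
      rw [← Matrix.kronecker_add, ← Matrix.kronecker_add,
        show U • (S * Bm) + (U • (Sb * S⁻¹) + U • ((T : ℝ) • (Sb * Bm)))
            = U • (S * Bm + Sb * S⁻¹ + (T : ℝ) • (Sb * Bm)) from by
          rw [smul_add, smul_add, add_assoc],
        key, smul_zero, Matrix.kronecker_zero]
    rw [hVt, hQdef, Matrix.add_mul, Matrix.mul_add, Matrix.mul_add, t1, t2, t3, t4,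
      add_assoc, hc, add_zero]
  have hrowmcolm : rowm * colm = W • (1 : Matrix (Fin 1) (Fin 1) ℝ) := by
    ext x y
    have hxy : x = y := Subsingleton.elim x y
    subst hxy
    simp only [hrowmdef, hcolmdef, Matrix.mul_apply, Matrix.of_apply, Matrix.smul_apply,
      Matrix.one_apply_eq, smul_eq_mul, mul_one]
    rw [hW]
    exact Finset.sum_congr rfl fun j _ => by rw [← sq, hm'def]
  have hrow1colm : (Matrix.of fun (_ : Fin 1) (_ : Fin T) => (1 : ℝ)) * colm =
      U • (1 : Matrix (Fin 1) (Fin 1) ℝ) := by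
    ext x y
    have hxy : x = y := Subsingleton.elim x y
    subst hxy
    simp only [hcolmdef, Matrix.mul_apply, Matrix.of_apply, one_mul, Matrix.smul_apply,
      Matrix.one_apply_eq, smul_eq_mul, mul_one]
    exact hUm
  -- the Schur complement
  have hQtPiQ : Qt * Pinv * Q =
      (1 : Matrix (Fin 1) (Fin 1) ℝ) ⊗ₖ ((I : ℝ)⁻¹ • (W • S⁻¹ + (U * U) • Bm)) := by
    rw [Matrix.mul_assoc, hPinvdef, Matrix.smul_mul, Matrix.mul_smul, hVtQ, hQtdef]
    rw [Matrix.add_mul, ← Matrix.mul_kronecker_mul, ← Matrix.mul_kronecker_mul,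
      Matrix.mul_one, Matrix.mul_one, hrowmcolm, hrow1colm]
    rw [Matrix.smul_kronecker, Matrix.smul_kronecker, ← Matrix.kronecker_smul,
      ← Matrix.kronecker_smul, smul_smul, ← Matrix.kronecker_add, ← Matrix.kronecker_smul,
      smul_add]
  set Dm : Matrix (Fin L) (Fin L) ℝ :=
    U • S⁻¹ + V • Bm - (I : ℝ)⁻¹ • (W • S⁻¹ + (U * U) • Bm) with hDmdef
  have hDform : Rb - Qt * Pinv * Q = (1 : Matrix (Fin 1) (Fin 1) ℝ) ⊗ₖ Dm := by
    rw [hQtPiQ, hRbdef, hDmdef]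
    ext ⟨a, b⟩ ⟨c, d⟩
    simp only [Matrix.sub_apply, Matrix.kroneckerMap_apply]
    ring
  have hDm : Dm = ((I : ℝ) * T)⁻¹ • E := by
    have h1 : Dm = (U - (T : ℝ)⁻¹ * V - (I : ℝ)⁻¹ * W + (I : ℝ)⁻¹ * ((U * U) * (T : ℝ)⁻¹)) • S⁻¹
        + ((T : ℝ)⁻¹ * V - (I : ℝ)⁻¹ * ((U * U) * (T : ℝ)⁻¹)) • Tb⁻¹ := by
      rw [hDmdef, hBm']
      module
    have h2 : ((I : ℝ) * T)⁻¹ • E =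
        (((I : ℝ) * T)⁻¹ * ((I : ℝ) * T * U - T * W + U ^ 2 - I * V)) • S⁻¹
        + (-(((I : ℝ) * T)⁻¹ * (U ^ 2 - (I : ℝ) * V))) • Tb⁻¹ := by
      rw [hE]
      module
    rw [h1, h2]
    congr 1
    · congr 1
      field_simp
      ring
    · congr 1
      field_simp
      ring
  set Di : Matrix (Fin 1 × Fin L) (Fin 1 × Fin L) ℝ :=
    (1 : Matrix (Fin 1) (Fin 1) ℝ) ⊗ₖ (((I : ℝ) * T) • E⁻¹) with hDidef
  have hDinv : (Rb - Qt * Pinv * Q) * Di = 1 := by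
    rw [hDform, hDidef, ← Matrix.mul_kronecker_mul, Matrix.one_mul, hDm,
      Matrix.smul_mul, Matrix.mul_smul, hEE, smul_smul, inv_mul_cancel₀ hIT0, one_smul,
      Matrix.one_kronecker_one]
  -- assemble
  have hGfinv : (G.submatrix f f)⁻¹ =
      Matrix.fromBlocks (Pinv + Pinv * Q * Di * Qt * Pinv) (-(Pinv * Q * Di))
        (-(Di * Qt * Pinv)) Di := by
    rw [hGf]
    exact schur_br P Q Qt Rb Pinv Di hPPinv hDinv
  have hsub : (G.submatrix f f)⁻¹ = G⁻¹.submatrix f f := by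
    apply Matrix.inv_eq_right_inv
    rw [Matrix.submatrix_mul_equiv G G⁻¹ _ f _,
      Matrix.mul_nonsing_inv _ ((Matrix.isUnit_iff_isUnit_det G).mp hGunit),
      Matrix.submatrix_one _ f.injective]
  ext l l'
  have h0 : G⁻¹ (Fin.last T, l) (Fin.last T, l') =
      (G⁻¹.submatrix f f) (Sum.inr ((0 : Fin 1), l)) (Sum.inr ((0 : Fin 1), l')) := by
    rw [Matrix.submatrix_apply, hfr, hfr]
  rw [Matrix.of_apply, h0, ← hsub, hGfinv, Matrix.fromBlocks_apply₂₂, hDidef]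
  simp [Matrix.kroneckerMap_apply, Matrix.one_apply_eq, Matrix.smul_apply]
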